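/- Let G be a Hausdorff étale groupoid and let (Σ, i, q) be a discrete twist by T ≤ R^× over G. Then: (a) the groupoid Σ is étale; (b) the map i is a homeomorphism onto an open subset of Σ; (c) the open bisections B_α and continuous local sections P_α : B_α → Σ witnessing local triviality can be chosen so that P_α(G^(0) ∩ B_α) ⊆ Σ^(0) for each α ∈ G; (d) if G is ample, the bisections B_α can be chosen compact. -/

import Mathlib

/-!
Common definitions: topological groupoids, bisections, étale/ample groupoids,
continuous `Rˣ`-valued 2-cocycles, and twisted Steinberg algebras.

A groupoid is modelled as a type `G` together with a composability predicate
`comp`, a (partial, junk-valued off composable pairs) multiplication `mul`,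
and an inversion `inv`.  The range and source maps are `r γ = γ γ⁻¹` and
`s γ = γ⁻¹ γ`, and the unit space is the set of fixed points of `r`.
-/

namespace TwistedSteinberg

structure GroupoidStruct (G : Type*) where
  comp : G → G → Prop
  mul : G → G → G
  inv : G → G

namespace GroupoidStruct

variable {G : Type*}

/-- The range map `r γ = γ γ⁻¹`. -/
def r (T : GroupoidStruct G) (γ : G) : G := T.mul γ (T.inv γ)

/-- The source map `s γ = γ⁻¹ γ`. -/
def s (T : GroupoidStruct G) (γ : G) : G := T.mul (T.inv γ) γ

/-- The unit space `G⁰`. -/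
def unitSpace (T : GroupoidStruct G) : Set G := {x | T.r x = x}

/-- The axioms making `(comp, mul, inv)` a groupoid. -/
structure IsGroupoid (T : GroupoidStruct G) : Prop where
  comp_iff : ∀ a b, T.comp a b ↔ T.s a = T.r b
  assoc : ∀ a b c, T.comp a b → T.comp b c →
    T.mul (T.mul a b) c = T.mul a (T.mul b c)
  inv_inv : ∀ a, T.inv (T.inv a) = a
  r_mul : ∀ a b, T.comp a b → T.r (T.mul a b) = T.r a
  s_mul : ∀ a b, T.comp a b → T.s (T.mul a b) = T.s b
  r_inv : ∀ a, T.r (T.inv a) = T.s a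
  s_inv : ∀ a, T.s (T.inv a) = T.r a
  r_mul_self : ∀ a, T.mul (T.r a) a = a
  mul_s_self : ∀ a, T.mul a (T.s a) = a
  r_unit : ∀ a, T.r a ∈ T.unitSpace
  s_unit : ∀ a, T.s a ∈ T.unitSpace

/-- A topological groupoid: inversion is continuous and multiplication is
continuous on the set of composable pairs. -/
structure IsTopGroupoid [TopologicalSpace G] (T : GroupoidStruct G)
    extends IsGroupoid T : Prop where
  continuous_inv : Continuous T.inv
  continuousOn_mul : ContinuousOn (fun p : G × G => T.mul p.1 p.2)
    {p : G × G | T.comp p.1 p.2}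

/-- `B` is a bisection if it is contained in an open set `U` on which both `r`
and `s` restrict to homeomorphisms onto open subsets. -/
def IsBisection [TopologicalSpace G] (T : GroupoidStruct G) (B : Set G) : Prop :=
  ∃ U : Set G, B ⊆ U ∧ IsOpen U ∧ Set.InjOn T.r U ∧ Set.InjOn T.s U ∧
    ∀ V : Set G, V ⊆ U → IsOpen V → IsOpen (T.r '' V) ∧ IsOpen (T.s '' V)

/-- A groupoid is étale if its range map is a local homeomorphism. -/
def IsEtale [TopologicalSpace G] (T : GroupoidStruct G) : Prop :=
  IsLocalHomeomorph T.r

/-- A groupoid is ample if it has a basis of compact open bisections. -/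
def IsAmple [TopologicalSpace G] (T : GroupoidStruct G) : Prop :=
  TopologicalSpace.IsTopologicalBasis
    {B : Set G | IsCompact B ∧ IsOpen B ∧ T.IsBisection B}

/-- The product `BD` of two subsets of a groupoid. -/
def setMul (T : GroupoidStruct G) (B D : Set G) : Set G :=
  {x | ∃ a ∈ B, ∃ b ∈ D, T.comp a b ∧ T.mul a b = x}

end GroupoidStruct

open GroupoidStruct

section Cocycle

variable {G R : Type*} [TopologicalSpace G] [CommRing R] [TopologicalSpace R]

/-- A continuous normalised `Rˣ`-valued 2-cocycle on the groupoid `T`. -/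
structure IsCocycle (T : GroupoidStruct G) (σ : G → G → Rˣ) : Prop where
  continuousOn : ContinuousOn (fun p : G × G => ((σ p.1 p.2 : Rˣ) : R))
    {p : G × G | T.comp p.1 p.2}
  cocycle : ∀ a b c, T.comp a b → T.comp b c →
    σ a b * σ (T.mul a b) c = σ a (T.mul b c) * σ b c
  norm_left : ∀ γ : G, σ (T.r γ) γ = 1
  norm_right : ∀ γ : G, σ γ (T.s γ) = 1

/-- The underlying `R`-module of the (twisted) Steinberg algebra: locally
constant compactly supported functions `G → R`. -/
def steinbergCarrier (G R : Type*) [TopologicalSpace G] [Zero R] : Set (G → R) :=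
  {f | IsLocallyConstant f ∧ IsCompact (Function.support f)}

/-- The twisted convolution product
`(f *σ g)(γ) = ∑_{αβ = γ} σ(α,β) f(α) g(β)`. -/
noncomputable def conv (T : GroupoidStruct G) (σ : G → G → Rˣ)
    (f g : G → R) (γ : G) : R :=
  ∑ᶠ (p : G × G) (_ : T.comp p.1 p.2 ∧ T.mul p.1 p.2 = γ),
    ((σ p.1 p.2 : Rˣ) : R) * f p.1 * g p.2

/-- A `T`-inverse involution on `R`: a ring involution restricting to
inversion on the subgroup `Tsub ≤ Rˣ`. -/
def IsTInverseInvolution (Tsub : Subgroup Rˣ) (c : R → R) : Prop :=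
  c 1 = 1 ∧ (∀ x y, c (x + y) = c x + c y) ∧ (∀ x y, c (x * y) = c x * c y) ∧
    (∀ x, c (c x) = x) ∧ ∀ z : Rˣ, z ∈ Tsub → c ((z : Rˣ) : R) = ((z⁻¹ : Rˣ) : R)

/-- The twisted involution `f*(γ) = σ(γ,γ⁻¹)⁻¹ ⬝ c (f (γ⁻¹))`. -/
noncomputable def convStar (T : GroupoidStruct G) (σ : G → G → Rˣ) (c : R → R)
    (f : G → R) (γ : G) : R :=
  (((σ γ (T.inv γ))⁻¹ : Rˣ) : R) * c (f (T.inv γ))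

end Cocycle
section Twist

/-!
Discrete twists `G⁰ × T → Σ → G` over a Hausdorff étale groupoid `G`,
where `T = Tsub` is a subgroup of the units `Rˣ` of a discrete commutative
unital ring `R`.  The inclusion is modelled as a map `i : G → Tsub → Σ`
(only its values `i x z` for `x ∈ G⁰` are relevant).
-/

variable {G S R : Type*} [TopologicalSpace G] [TopologicalSpace S]
  [CommRing R] [TopologicalSpace R]

/-- A discrete twist `(Σ, i, q)` by `Tsub ≤ Rˣ` over `G`. -/
structure IsDiscreteTwist (TG : GroupoidStruct G) (TS : GroupoidStruct S)
    (Tsub : Subgroup Rˣ) (i : G → Tsub → S) (q : S → G) : Prop where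
  topS : TS.IsTopGroupoid
  t2S : T2Space S
  locallyCompactS : LocallyCompactSpace S
  unit_eq : TS.unitSpace = (fun x => i x 1) '' TG.unitSpace
  i_continuousOn : ContinuousOn (fun p : G × Tsub => i p.1 p.2)
    (TG.unitSpace ×ˢ (Set.univ : Set Tsub))
  i_injective : ∀ x ∈ TG.unitSpace, ∀ x' ∈ TG.unitSpace, ∀ z z' : Tsub,
    i x z = i x' z' → x = x' ∧ z = z'
  i_comp : ∀ x ∈ TG.unitSpace, ∀ z w : Tsub, TS.comp (i x z) (i x w)
  i_mul : ∀ x ∈ TG.unitSpace, ∀ z w : Tsub, TS.mul (i x z) (i x w) = i x (z * w)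
  i_inv : ∀ x ∈ TG.unitSpace, ∀ z : Tsub, TS.inv (i x z) = i x z⁻¹
  q_continuous : Continuous q
  q_surjective : Function.Surjective q
  q_quotient : ∀ V : Set G, IsOpen V ↔ IsOpen (q ⁻¹' V)
  q_comp : ∀ ε δ, TS.comp ε δ → TG.comp (q ε) (q δ)
  q_mul : ∀ ε δ, TS.comp ε δ → q (TS.mul ε δ) = TG.mul (q ε) (q δ)
  q_inv : ∀ ε, q (TS.inv ε) = TG.inv (q ε)
  q_i : ∀ x ∈ TG.unitSpace, ∀ z : Tsub, q (i x z) = x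
  i_q_unit : ∀ ε ∈ TS.unitSpace, i (q ε) 1 = ε
  q_unit_mem : ∀ ε ∈ TS.unitSpace, q ε ∈ TG.unitSpace
  exact_fibre : ∀ x ∈ TG.unitSpace, ∀ ε, q ε = x ↔ ∃ z : Tsub, ε = i x z
  central_comp_left : ∀ (ε : S) (z : Tsub), TS.comp (i (TG.r (q ε)) z) ε
  central_comp_right : ∀ (ε : S) (z : Tsub), TS.comp ε (i (TG.s (q ε)) z)
  central : ∀ (ε : S) (z : Tsub),
    TS.mul (i (TG.r (q ε)) z) ε = TS.mul ε (i (TG.s (q ε)) z)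
  locally_trivial : ∀ α : G, ∃ B : Set G, α ∈ B ∧ IsOpen B ∧ TG.IsBisection B ∧
    ∃ P : G → S, ContinuousOn P B ∧ (∀ β ∈ B, q (P β) = β) ∧
      Set.BijOn (fun p : G × Tsub => TS.mul (i (TG.r p.1) p.2) (P p.1))
        (B ×ˢ (Set.univ : Set Tsub)) (q ⁻¹' B) ∧
      ContinuousOn (fun p : G × Tsub => TS.mul (i (TG.r p.1) p.2) (P p.1))
        (B ×ˢ (Set.univ : Set Tsub)) ∧
      ∀ V ⊆ B ×ˢ (Set.univ : Set Tsub), IsOpen V →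
        IsOpen ((fun p : G × Tsub => TS.mul (i (TG.r p.1) p.2) (P p.1)) '' V)

/-- The action `z ⬝ ε = i(r(ε), z) ε` of `Tsub` on the twist `Σ`. -/
def twistAct (TG : GroupoidStruct G) (TS : GroupoidStruct S)
    {Tsub : Subgroup Rˣ} (i : G → Tsub → S) (q : S → G) (z : Tsub) (ε : S) : S :=
  TS.mul (i (TG.r (q ε)) z) ε

/-- A continuous global section `P : G → Σ` of the twist. -/
def IsGlobalSection (TG : GroupoidStruct G) (TS : GroupoidStruct S)
    (q : S → G) (P : G → S) : Prop :=
  Continuous P ∧ (∀ γ, q (P γ) = γ) ∧ ∀ x ∈ TG.unitSpace, P x ∈ TS.unitSpace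

/-- The 2-cocycle `σ` is induced by the section `P`, i.e.
`P(α) P(β) P(αβ)⁻¹ = i(r(α), σ(α,β))` for composable `(α,β)`. -/
def InducesCocycle (TG : GroupoidStruct G) (TS : GroupoidStruct S)
    {Tsub : Subgroup Rˣ} (i : G → Tsub → S) (P : G → S) (σ : G → G → Tsub) : Prop :=
  ∀ α β, TG.comp α β →
    TS.mul (TS.mul (P α) (P β)) (TS.inv (P (TG.mul α β))) = i (TG.r α) (σ α β)

/-- A continuous normalised 2-cocycle with values in the subgroup `Tsub ≤ Rˣ`. -/
structure IsCocycleSub (TG : GroupoidStruct G) (Tsub : Subgroup Rˣ)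
    (σ : G → G → Tsub) : Prop where
  continuousOn : ContinuousOn (fun p : G × G => (((σ p.1 p.2 : Rˣ)) : R))
    {p : G × G | TG.comp p.1 p.2}
  cocycle : ∀ a b c, TG.comp a b → TG.comp b c →
    σ a b * σ (TG.mul a b) c = σ a (TG.mul b c) * σ b c
  norm_left : ∀ γ : G, σ (TG.r γ) γ = 1
  norm_right : ∀ γ : G, σ γ (TG.s γ) = 1

/-- `σ` and `τ` are cohomologous via the continuous function `b : G → Tsub`. -/
def CohomologousVia (TG : GroupoidStruct G) {Tsub : Subgroup Rˣ}
    (σ τ : G → G → Tsub) (b : G → Tsub) : Prop :=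
  Continuous (fun γ : G => ((b γ : Rˣ) : R)) ∧ (∀ x ∈ TG.unitSpace, b x = 1) ∧
    ∀ α β, TG.comp α β → σ α β * (τ α β)⁻¹ = b α * b β * (b (TG.mul α β))⁻¹

/-- The twisted groupoid `G ×_σ T`. -/
def prodTwist (TG : GroupoidStruct G) (Tsub : Subgroup Rˣ) (σ : G → G → Tsub) :
    GroupoidStruct (G × Tsub) where
  comp p p' := TG.comp p.1 p'.1
  mul p p' := (TG.mul p.1 p'.1, σ p.1 p'.1 * p.2 * p'.2)
  inv p := (TG.inv p.1, (σ p.1 (TG.inv p.1))⁻¹ * p.2⁻¹)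

/-- The inclusion `i_σ : G⁰ × T → G ×_σ T`. -/
def prodTwistI (Tsub : Subgroup Rˣ) : G → Tsub → G × Tsub := fun x z => (x, z)

/-- The projection `q_σ : G ×_σ T → G`. -/
def prodTwistQ (Tsub : Subgroup Rˣ) : G × Tsub → G := fun p => p.1

/-- An isomorphism of discrete twists: a homeomorphism and groupoid
isomorphism intertwining the inclusions and projections. -/
def IsTwistIso {S1 S2 : Type*} [TopologicalSpace S1] [TopologicalSpace S2]
    (TG : GroupoidStruct G) (T1 : GroupoidStruct S1) (T2 : GroupoidStruct S2)
    {Tsub : Subgroup Rˣ} (i1 : G → Tsub → S1) (q1 : S1 → G)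
    (i2 : G → Tsub → S2) (q2 : S2 → G) (ψ : S1 → S2) : Prop :=
  Function.Bijective ψ ∧ Continuous ψ ∧ (∀ V : Set S1, IsOpen V → IsOpen (ψ '' V)) ∧
    (∀ δ ε, T1.comp δ ε → T2.comp (ψ δ) (ψ ε) ∧ ψ (T1.mul δ ε) = T2.mul (ψ δ) (ψ ε)) ∧
    (∀ x ∈ TG.unitSpace, ∀ z : Tsub, ψ (i1 x z) = i2 x z) ∧
    ∀ ε, q2 (ψ ε) = q1 ε

/-- The carrier of the twisted Steinberg algebra `A_R(G; Σ)`: continuous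
`Tsub`-equivariant functions `f : Σ → R` such that `q(supp f)` has compact
closure. -/
def twistCarrier (TG : GroupoidStruct G) (TS : GroupoidStruct S)
    {Tsub : Subgroup Rˣ} (i : G → Tsub → S) (q : S → G) : Set (S → R) :=
  {f | Continuous f ∧
    (∀ (z : Tsub) (ε : S), f (TS.mul (i (TG.r (q ε)) z) ε) = ((z : Rˣ) : R) * f ε) ∧
    IsCompact (closure (q '' Function.support f))}

/-- The convolution `(f *_Σ g)(ε) = ∑_{γ ∈ G^{s(q(ε))}} f(ε P(γ)) g(P(γ)⁻¹)`. -/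
noncomputable def twistConv (TG : GroupoidStruct G) (TS : GroupoidStruct S)
    (q : S → G) (P : G → S) (f g : S → R) (ε : S) : R :=
  ∑ᶠ (γ : G) (_ : TG.r γ = TG.s (q ε)), f (TS.mul ε (P γ)) * g (TS.inv (P γ))

/-- The involution `f*(ε) = c (f (ε⁻¹))` on `A_R(G; Σ)`. -/
def twistStar (TS : GroupoidStruct S) (c : R → R) (f : S → R) (ε : S) : R :=
  c (f (TS.inv ε))

end Twist
set_option linter.unusedSectionVars false
section AuxGroupoid
open GroupoidStruct
variable {H : Type*} {T : GroupoidStruct H}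

lemma comp_self_inv (h : T.IsGroupoid) (a : H) : T.comp a (T.inv a) :=
  (h.comp_iff _ _).2 (h.r_inv a).symm

lemma comp_inv_self (h : T.IsGroupoid) (a : H) : T.comp (T.inv a) a :=
  (h.comp_iff _ _).2 (h.s_inv a)

lemma s_of_unit (h : T.IsGroupoid) {x : H} (hx : x ∈ T.unitSpace) : T.s x = x := by
  have hx' : T.r x = x := hx
  have h1 : T.s (T.mul x (T.inv x)) = T.s (T.inv x) := h.s_mul _ _ (comp_self_inv h x)
  have h2 : T.mul x (T.inv x) = x := hx'
  rw [h2] at h1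
  rw [h1, h.s_inv, hx']

lemma cont_r [TopologicalSpace H] (h : T.IsTopGroupoid) : Continuous T.r := by
  have : T.r = (fun p : H × H => T.mul p.1 p.2) ∘ (fun a => (a, T.inv a)) := rfl
  rw [this]
  exact h.continuousOn_mul.comp_continuous
    (continuous_id.prodMk h.continuous_inv) (fun a => comp_self_inv h.toIsGroupoid a)

lemma cont_s [TopologicalSpace H] (h : T.IsTopGroupoid) : Continuous T.s := by
  have : T.s = (fun p : H × H => T.mul p.1 p.2) ∘ (fun a => (T.inv a, a)) := rfl
  rw [this]
  exact h.continuousOn_mul.comp_continuous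
    (h.continuous_inv.prodMk continuous_id) (fun a => comp_inv_self h.toIsGroupoid a)

lemma unit_isOpen [TopologicalSpace H] (h : T.IsGroupoid) (he : T.IsEtale) :
    IsOpen T.unitSpace := by
  have : T.unitSpace = T.r '' Set.univ := by
    ext x
    constructor
    · intro hx; exact ⟨x, Set.mem_univ x, hx⟩
    · rintro ⟨a, -, rfl⟩; exact h.r_unit a
  rw [this]
  exact he.isOpenMap _ isOpen_univ

lemma unit_isClosed [TopologicalSpace H] [T2Space H] (h : T.IsTopGroupoid) :
    IsClosed T.unitSpace :=
  isClosed_eq (cont_r h) continuous_id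

lemma isBisection_mono [TopologicalSpace H] {B B' : Set H} (hsub : B' ⊆ B)
    (h : T.IsBisection B) : T.IsBisection B' := by
  obtain ⟨U, hBU, hU⟩ := h
  exact ⟨U, hsub.trans hBU, hU⟩

end AuxGroupoid

section TwistAux
open GroupoidStruct
variable {G S R : Type*} [TopologicalSpace G] [TopologicalSpace S]
  [CommRing R] [TopologicalSpace R] [DiscreteTopology R]
  {TG : GroupoidStruct G} {TS : GroupoidStruct S} {Tsub : Subgroup Rˣ}
  {i : G → Tsub → S} {q : S → G}

lemma rS_eq (hTw : IsDiscreteTwist TG TS Tsub i q) (ε : S) :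
    TS.r ε = i (TG.r (q ε)) 1 := by
  have h1 := hTw.i_q_unit (TS.r ε) (hTw.topS.r_unit ε)
  have hq : q (TS.r ε) = TG.r (q ε) := by
    show q (TS.mul ε (TS.inv ε)) = TG.mul (q ε) (TG.inv (q ε))
    rw [hTw.q_mul ε _ (comp_self_inv hTw.topS.toIsGroupoid ε), hTw.q_inv]
  rw [← h1, hq]

lemma sS_eq (hTw : IsDiscreteTwist TG TS Tsub i q) (ε : S) :
    TS.s ε = i (TG.s (q ε)) 1 := by
  have h1 := hTw.i_q_unit (TS.s ε) (hTw.topS.s_unit ε)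
  have hq : q (TS.s ε) = TG.s (q ε) := by
    show q (TS.mul (TS.inv ε) ε) = TG.mul (TG.inv (q ε)) (q ε)
    rw [hTw.q_mul _ ε (comp_inv_self hTw.topS.toIsGroupoid ε), hTw.q_inv]
  rw [← h1, hq]

lemma q_act (hTG : TG.IsGroupoid) (hTw : IsDiscreteTwist TG TS Tsub i q)
    (z : Tsub) (ε : S) : q (twistAct TG TS i q z ε) = q ε := by
  show q (TS.mul (i (TG.r (q ε)) z) ε) = q ε
  rw [hTw.q_mul _ _ (hTw.central_comp_left ε z), hTw.q_i _ (hTG.r_unit (q ε)) z]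
  exact hTG.r_mul_self (q ε)

lemma act_one (hTw : IsDiscreteTwist TG TS Tsub i q) (ε : S) :
    twistAct TG TS i q 1 ε = ε := by
  show TS.mul (i (TG.r (q ε)) 1) ε = ε
  rw [← rS_eq hTw ε]
  exact hTw.topS.r_mul_self ε

lemma act_act (hTG : TG.IsGroupoid) (hTw : IsDiscreteTwist TG TS Tsub i q)
    (z w : Tsub) (ε : S) :
    twistAct TG TS i q z (twistAct TG TS i q w ε) = twistAct TG TS i q (z * w) ε := by
  have hq := q_act hTG hTw w ε
  show TS.mul (i (TG.r (q (twistAct TG TS i q w ε))) z) _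
      = TS.mul (i (TG.r (q ε)) (z * w)) ε
  rw [hq]
  have hx : TG.r (q ε) ∈ TG.unitSpace := hTG.r_unit _
  show TS.mul (i (TG.r (q ε)) z) (TS.mul (i (TG.r (q ε)) w) ε) = _
  rw [← hTw.topS.assoc _ _ _ (hTw.i_comp _ hx z w) (hTw.central_comp_left ε w),
    hTw.i_mul _ hx z w]

lemma act_cont (hTGt : TG.IsTopGroupoid) (hTw : IsDiscreteTwist TG TS Tsub i q)
    (z : Tsub) : Continuous (twistAct TG TS i q z) := by
  have g1 : Continuous (fun ε : S => i (TG.r (q ε)) z) := by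
    have h : (fun ε : S => i (TG.r (q ε)) z)
        = (fun p : G × Tsub => i p.1 p.2) ∘ (fun ε : S => (TG.r (q ε), z)) := rfl
    rw [h]
    exact hTw.i_continuousOn.comp_continuous
      (((cont_r hTGt).comp hTw.q_continuous).prodMk continuous_const)
      (fun ε => Set.mem_prod.mpr ⟨hTGt.r_unit _, Set.mem_univ _⟩)
  have h : twistAct TG TS i q z
      = (fun p : S × S => TS.mul p.1 p.2) ∘ (fun ε : S => (i (TG.r (q ε)) z, ε)) := rfl
  rw [h]
  exact hTw.topS.continuousOn_mul.comp_continuous (g1.prodMk continuous_id)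
    (fun ε => hTw.central_comp_left ε z)

lemma act_leftInv (hTG : TG.IsGroupoid) (hTw : IsDiscreteTwist TG TS Tsub i q)
    (z : Tsub) :
    Function.LeftInverse (twistAct TG TS i q z⁻¹) (twistAct TG TS i q z) := fun ε => by
  rw [act_act hTG hTw, inv_mul_cancel, act_one hTw]

lemma act_image_open (hTGt : TG.IsTopGroupoid) (hTw : IsDiscreteTwist TG TS Tsub i q)
    (z : Tsub) {O : Set S} (hO : IsOpen O) :
    IsOpen (twistAct TG TS i q z '' O) := by
  have h1 := act_leftInv hTGt.toIsGroupoid hTw z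
  have h2 : Function.RightInverse (twistAct TG TS i q z⁻¹) (twistAct TG TS i q z) := by
    intro ε
    rw [act_act hTGt.toIsGroupoid hTw, mul_inv_cancel, act_one hTw]
  rw [congrFun (Set.image_eq_preimage_of_inverse h1 h2) O]
  exact hO.preimage (act_cont hTGt hTw z⁻¹)

lemma mul_i_eq_act (ε : S) {β : G} (hq : q ε = β) (z : Tsub) :
    TS.mul (i (TG.r β) z) ε = twistAct TG TS i q z ε := by
  subst hq; rfl

lemma q_mul_i (hTG : TG.IsGroupoid) (hTw : IsDiscreteTwist TG TS Tsub i q)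
    (ε : S) {β : G} (hq : q ε = β) (z : Tsub) :
    q (TS.mul (i (TG.r β) z) ε) = β := by
  rw [mul_i_eq_act ε hq, q_act hTG hTw, hq]

end TwistAux
section KeyAux
set_option linter.unusedSectionVars false
open GroupoidStruct
variable {G S R : Type*} [TopologicalSpace G] [TopologicalSpace S]
  [CommRing R] [TopologicalSpace R] [DiscreteTopology R]
  {TG : GroupoidStruct G} {TS : GroupoidStruct S} {Tsub : Subgroup Rˣ}
  {i : G → Tsub → S} {q : S → G}

lemma key_local (hTGt : TG.IsTopGroupoid) (hU0 : IsOpen TG.unitSpace)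
    (hTw : IsDiscreteTwist TG TS Tsub i q)
    {x : G} (hx : x ∈ TG.unitSpace) {B : Set G} {P : G → S}
    (hxB : x ∈ B) (hBo : IsOpen B) (hP : ContinuousOn P B)
    (hqP : ∀ β ∈ B, q (P β) = β)
    (hbij : Set.BijOn (fun p : G × Tsub => TS.mul (i (TG.r p.1) p.2) (P p.1))
      (B ×ˢ (Set.univ : Set Tsub)) (q ⁻¹' B))
    (hopen : ∀ V ⊆ B ×ˢ (Set.univ : Set Tsub), IsOpen V →
      IsOpen ((fun p : G × Tsub => TS.mul (i (TG.r p.1) p.2) (P p.1)) '' V)) :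
    ∃ (W : Set G) (z₀ : Tsub), x ∈ W ∧ IsOpen W ∧ W ⊆ B ∧ W ⊆ TG.unitSpace ∧
      (∀ β ∈ W, P β = i β z₀) ∧ IsOpen ((fun β => i β (1 : Tsub)) '' W) := by
  set φ := fun p : G × Tsub => TS.mul (i (TG.r p.1) p.2) (P p.1) with hφdef
  obtain ⟨z₀, hz₀⟩ := (hTw.exact_fibre x hx (P x)).1 (hqP x hxB)
  have hiφ : ∀ β ∈ B, ∀ _ : β ∈ TG.unitSpace, ∀ (w z' : Tsub), P β = i β z' →
      φ (β, w) = i β (w * z') := by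
    intro β hβB hβu w z' hz'
    show TS.mul (i (TG.r β) w) (P β) = i β (w * z')
    have hr : TG.r β = β := hβu
    rw [hr, hz', hTw.i_mul β hβu w z']
  have hsPi : ∀ β ∈ B, β ∈ TG.unitSpace → TS.s (P β) = i β 1 := by
    intro β hβB hβu
    rw [sS_eq hTw (P β), hqP β hβB, s_of_unit hTGt.toIsGroupoid hβu]
  set O := φ '' (B ×ˢ ({z₀⁻¹} : Set Tsub)) with hOdef
  have hOopen : IsOpen O := hopen _ (Set.prod_mono subset_rfl (Set.subset_univ _))
    (hBo.prod (isOpen_discrete _))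
  set W := (B ∩ TG.unitSpace) ∩ (fun β => TS.s (P β)) ⁻¹' O with hWdef
  have hWsubB : W ⊆ B := fun β hβ => hβ.1.1
  have hWsubU : W ⊆ TG.unitSpace := fun β hβ => hβ.1.2
  have hWo : IsOpen W := by
    apply ContinuousOn.isOpen_inter_preimage _ (hBo.inter hU0) hOopen
    exact (cont_s hTw.topS).comp_continuousOn (hP.mono Set.inter_subset_left)
  have hxW : x ∈ W := by
    refine ⟨⟨hxB, hx⟩, ?_⟩
    show TS.s (P x) ∈ O
    rw [hsPi x hxB hx]
    refine ⟨(x, z₀⁻¹), Set.mem_prod.mpr ⟨hxB, rfl⟩, ?_⟩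
    rw [hiφ x hxB hx z₀⁻¹ z₀ hz₀, inv_mul_cancel]
  have hPW : ∀ β ∈ W, P β = i β z₀ := by
    rintro β ⟨⟨hβB, hβu⟩, hβO⟩
    obtain ⟨z', hz'⟩ := (hTw.exact_fibre β hβu (P β)).1 (hqP β hβB)
    obtain ⟨p, hp, hφp⟩ := hβO
    have h1 : φ p = φ (β, z'⁻¹) := by
      rw [hφp]
      show TS.s (P β) = φ (β, z'⁻¹)
      rw [hsPi β hβB hβu, hiφ β hβB hβu z'⁻¹ z' hz', inv_mul_cancel]
    have hpB : p ∈ B ×ˢ (Set.univ : Set Tsub) :=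
      Set.mem_prod.mpr ⟨(Set.mem_prod.mp hp).1, Set.mem_univ _⟩
    have h2 : p = (β, z'⁻¹) :=
      hbij.injOn hpB (Set.mem_prod.mpr ⟨hβB, Set.mem_univ _⟩) h1
    have h3 : (z₀⁻¹ : Tsub) = z'⁻¹ := by
      have := (Set.mem_prod.mp hp).2
      rw [Set.mem_singleton_iff] at this
      rw [← this, h2]
    have h4 : z' = z₀ := by
      have := congrArg (fun w : Tsub => w⁻¹) h3
      simpa using this.symm
    rw [hz', h4]
  have himg : (fun β => i β (1 : Tsub)) '' W = φ '' (W ×ˢ ({z₀⁻¹} : Set Tsub)) := by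
    ext ε
    constructor
    · rintro ⟨β, hβ, rfl⟩
      refine ⟨(β, z₀⁻¹), Set.mem_prod.mpr ⟨hβ, rfl⟩, ?_⟩
      rw [hiφ β (hWsubB hβ) (hWsubU hβ) z₀⁻¹ z₀ (hPW β hβ), inv_mul_cancel]
    · rintro ⟨⟨β, w⟩, hmem, rfl⟩
      have hβ : β ∈ W := (Set.mem_prod.mp hmem).1
      have hw : w = z₀⁻¹ := Set.mem_singleton_iff.mp (Set.mem_prod.mp hmem).2
      subst hw
      refine ⟨β, hβ, ?_⟩
      rw [hiφ β (hWsubB hβ) (hWsubU hβ) z₀⁻¹ z₀ (hPW β hβ), inv_mul_cancel]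
  refine ⟨W, z₀, hxW, hWo, hWsubB, hWsubU, hPW, ?_⟩
  rw [himg]
  exact hopen _ (Set.prod_mono hWsubB (Set.subset_univ _)) (hWo.prod (isOpen_discrete _))

end KeyAux
section KeyAux2
set_option linter.unusedSectionVars false
open GroupoidStruct
variable {G S R : Type*} [TopologicalSpace G] [TopologicalSpace S]
  [CommRing R] [TopologicalSpace R] [DiscreteTopology R]
  {TG : GroupoidStruct G} {TS : GroupoidStruct S} {Tsub : Subgroup Rˣ}
  {i : G → Tsub → S} {q : S → G}

lemma sigma0_isOpen (hTGt : TG.IsTopGroupoid) (hetale : TG.IsEtale)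
    (hTw : IsDiscreteTwist TG TS Tsub i q) : IsOpen TS.unitSpace := by
  rw [isOpen_iff_forall_mem_open]
  intro ε hε
  have hqε : q ε ∈ TG.unitSpace := hTw.q_unit_mem ε hε
  have hεeq : i (q ε) 1 = ε := hTw.i_q_unit ε hε
  obtain ⟨B, hxB, hBo, _, P, hP, hqP, hbij, hcont, hopen⟩ := hTw.locally_trivial (q ε)
  obtain ⟨W, z₀, hxW, hWo, hWB, hWu, hPW, hWio⟩ :=
    key_local hTGt (unit_isOpen hTGt.toIsGroupoid hetale) hTw hqε hxB hBo hP hqP hbij hopen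
  refine ⟨(fun β => i β (1:Tsub)) '' W, ?_, hWio, ⟨q ε, hxW, hεeq⟩⟩
  rintro ε' ⟨β, hβ, rfl⟩
  rw [hTw.unit_eq]
  exact ⟨β, hWu hβ, rfl⟩

lemma i_image_open (hTGt : TG.IsTopGroupoid) (hetale : TG.IsEtale)
    (hTw : IsDiscreteTwist TG TS Tsub i q) :
    ∀ V ⊆ TG.unitSpace ×ˢ (Set.univ : Set Tsub), IsOpen V →
      IsOpen ((fun p : G × Tsub => i p.1 p.2) '' V) := by
  intro V hVsub hVo
  rw [isOpen_iff_forall_mem_open]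
  rintro ε ⟨⟨x, z⟩, hxz, rfl⟩
  rw [isOpen_prod_iff] at hVo
  obtain ⟨u, v, hu, hv, hxu, hzv, huv⟩ := hVo x z hxz
  have hx0 : x ∈ TG.unitSpace := (hVsub hxz).1
  set W := u ∩ TG.unitSpace with hWdef
  have hWo : IsOpen W := hu.inter (unit_isOpen hTGt.toIsGroupoid hetale)
  have hact : ∀ y ∈ TG.unitSpace, twistAct TG TS i q z (i y 1) = i y z := by
    intro y hy
    show TS.mul (i (TG.r (q (i y 1))) z) (i y 1) = i y z
    rw [hTw.q_i y hy 1]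
    have hr : TG.r y = y := hy
    rw [hr, hTw.i_mul y hy z 1, mul_one]
  have hclaim : (fun p : G × Tsub => i p.1 p.2) '' (W ×ˢ ({z} : Set Tsub))
      = twistAct TG TS i q z '' (TS.unitSpace ∩ q ⁻¹' W) := by
    ext ε'
    constructor
    · rintro ⟨⟨y, w⟩, hmem, rfl⟩
      have hyW : y ∈ W := (Set.mem_prod.mp hmem).1
      have hw : w = z := Set.mem_singleton_iff.mp (Set.mem_prod.mp hmem).2
      subst hw
      refine ⟨i y 1, ⟨?_, ?_⟩, hact y hyW.2⟩
      · rw [hTw.unit_eq]; exact ⟨y, hyW.2, rfl⟩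
      · show q (i y 1) ∈ W
        rw [hTw.q_i y hyW.2 1]; exact hyW
    · rintro ⟨ε'', ⟨hε''u, hε''W⟩, rfl⟩
      have h1 : i (q ε'') 1 = ε'' := hTw.i_q_unit ε'' hε''u
      have h2 : q ε'' ∈ TG.unitSpace := hTw.q_unit_mem ε'' hε''u
      refine ⟨(q ε'', z), Set.mem_prod.mpr ⟨hε''W, rfl⟩, ?_⟩
      show i (q ε'') z = twistAct TG TS i q z ε''
      conv_rhs => rw [← h1]
      exact (hact (q ε'') h2).symm
  have hopen2 : IsOpen ((fun p : G × Tsub => i p.1 p.2) '' (W ×ˢ ({z} : Set Tsub))) := by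
    rw [hclaim]
    exact act_image_open hTGt hTw z
      ((sigma0_isOpen hTGt hetale hTw).inter (hWo.preimage hTw.q_continuous))
  refine ⟨_, ?_, hopen2, ⟨(x, z), Set.mem_prod.mpr ⟨⟨hxu, hx0⟩, rfl⟩, rfl⟩⟩
  apply Set.image_mono
  rintro ⟨y, w⟩ hmem
  have h := Set.mem_prod.mp hmem
  refine huv (Set.mem_prod.mpr ⟨h.1.1, ?_⟩)
  rw [Set.mem_singleton_iff.mp h.2]; exact hzv

lemma restrict_triv (hTGt : TG.IsTopGroupoid) (hTw : IsDiscreteTwist TG TS Tsub i q)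
    {B B' : Set G} {P : G → S} (hB' : B' ⊆ B)
    (hP : ContinuousOn P B) (hqP : ∀ β ∈ B, q (P β) = β)
    (hbij : Set.BijOn (fun p : G × Tsub => TS.mul (i (TG.r p.1) p.2) (P p.1))
      (B ×ˢ (Set.univ : Set Tsub)) (q ⁻¹' B))
    (hcont : ContinuousOn (fun p : G × Tsub => TS.mul (i (TG.r p.1) p.2) (P p.1))
      (B ×ˢ (Set.univ : Set Tsub)))
    (hopen : ∀ V ⊆ B ×ˢ (Set.univ : Set Tsub), IsOpen V →
      IsOpen ((fun p : G × Tsub => TS.mul (i (TG.r p.1) p.2) (P p.1)) '' V)) :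
    ContinuousOn P B' ∧ (∀ β ∈ B', q (P β) = β) ∧
    Set.BijOn (fun p : G × Tsub => TS.mul (i (TG.r p.1) p.2) (P p.1))
      (B' ×ˢ (Set.univ : Set Tsub)) (q ⁻¹' B') ∧
    ContinuousOn (fun p : G × Tsub => TS.mul (i (TG.r p.1) p.2) (P p.1))
      (B' ×ˢ (Set.univ : Set Tsub)) ∧
    ∀ V ⊆ B' ×ˢ (Set.univ : Set Tsub), IsOpen V →
      IsOpen ((fun p : G × Tsub => TS.mul (i (TG.r p.1) p.2) (P p.1)) '' V) := by
  set φ := fun p : G × Tsub => TS.mul (i (TG.r p.1) p.2) (P p.1) with hφdef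
  have hqφ : ∀ p : G × Tsub, p.1 ∈ B → q (φ p) = p.1 := fun p hp =>
    q_mul_i hTGt.toIsGroupoid hTw (P p.1) (hqP p.1 hp) p.2
  have hsub : B' ×ˢ (Set.univ : Set Tsub) ⊆ B ×ˢ Set.univ :=
    Set.prod_mono hB' subset_rfl
  refine ⟨hP.mono hB', fun β hβ => hqP β (hB' hβ),
    ⟨?_, hbij.injOn.mono hsub, ?_⟩, hcont.mono hsub,
    fun V hV hVo => hopen V (hV.trans hsub) hVo⟩
  · intro p hp
    show q (φ p) ∈ B'
    rw [hqφ p (hB' (Set.mem_prod.mp hp).1)]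
    exact (Set.mem_prod.mp hp).1
  · intro ε hε
    have hε' : ε ∈ q ⁻¹' B := hB' hε
    obtain ⟨p, hp, hφp⟩ := hbij.surjOn hε'
    have h1 : p.1 = q ε := by rw [← hφp, hqφ p (Set.mem_prod.mp hp).1]
    refine ⟨p, Set.mem_prod.mpr ⟨?_, Set.mem_univ _⟩, hφp⟩
    rw [h1]; exact hε

end KeyAux2
section KeyAux3
set_option linter.unusedSectionVars false
open GroupoidStruct
variable {G S R : Type*} [TopologicalSpace G] [TopologicalSpace S]
  [CommRing R] [TopologicalSpace R] [DiscreteTopology R]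
  {TG : GroupoidStruct G} {TS : GroupoidStruct S} {Tsub : Subgroup Rˣ}
  {i : G → Tsub → S} {q : S → G}

lemma etaleS (hTGt : TG.IsTopGroupoid) (hetale : TG.IsEtale)
    (hTw : IsDiscreteTwist TG TS Tsub i q) : TS.IsEtale := by
  rw [GroupoidStruct.IsEtale, isLocalHomeomorph_iff_isOpenEmbedding_restrict]
  intro ε
  obtain ⟨B, hαB, hBo, ⟨U, hBU, hUo, hrinj, hsinj, himg⟩, P, hP, hqP, hbij, hcont, hopen⟩ :=
    hTw.locally_trivial (q ε)
  set φ := fun p : G × Tsub => TS.mul (i (TG.r p.1) p.2) (P p.1) with hφdef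
  have hqφ : ∀ p : G × Tsub, p.1 ∈ B → q (φ p) = p.1 := fun p hp =>
    q_mul_i hTGt.toIsGroupoid hTw (P p.1) (hqP p.1 hp) p.2
  have hrφ : ∀ p : G × Tsub, p.1 ∈ B → TS.r (φ p) = i (TG.r p.1) 1 := by
    intro p hp
    rw [rS_eq hTw, hqφ p hp]
  obtain ⟨p₀, hp₀, hφε⟩ := hbij.surjOn (show ε ∈ q ⁻¹' B from hαB)
  set z₀ := p₀.2 with hz₀def
  set Uε := φ '' (B ×ˢ ({z₀} : Set Tsub)) with hUεdef
  have hUεo : IsOpen Uε := hopen _ (Set.prod_mono subset_rfl (Set.subset_univ _))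
    (hBo.prod (isOpen_discrete _))
  have hεUε : ε ∈ Uε := ⟨p₀, Set.mem_prod.mpr ⟨hp₀.1, rfl⟩, hφε⟩
  refine ⟨Uε, hUεo.mem_nhds hεUε, ?_⟩
  apply Topology.IsOpenEmbedding.of_continuous_injective_isOpenMap
  · exact (cont_r hTw.topS).comp continuous_subtype_val
  · rintro ⟨ε₁, hε₁⟩ ⟨ε₂, hε₂⟩ h
    obtain ⟨p₁, hp₁, he₁⟩ := hε₁
    obtain ⟨p₂, hp₂, he₂⟩ := hε₂
    have h' : TS.r ε₁ = TS.r ε₂ := h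
    rw [← he₁, ← he₂, hrφ p₁ hp₁.1, hrφ p₂ hp₂.1] at h'
    have h2 := hTw.i_injective _ (hTGt.r_unit p₁.1) _ (hTGt.r_unit p₂.1) 1 1 h'
    have h3 : p₁.1 = p₂.1 := hrinj (hBU hp₁.1) (hBU hp₂.1) h2.1
    have h4 : p₁ = p₂ := Prod.ext h3 (by
      rw [Set.mem_singleton_iff.mp hp₁.2, Set.mem_singleton_iff.mp hp₂.2])
    apply Subtype.ext
    show ε₁ = ε₂
    rw [← he₁, ← he₂, h4]
  · intro V' hV'
    obtain ⟨V, hVo, rfl⟩ := isOpen_induced_iff.mp hV'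
    have himage : Uε.domRestrict TS.r '' (Subtype.val ⁻¹' V) = TS.r '' (Uε ∩ V) := by
      ext y
      constructor
      · rintro ⟨⟨ε', hε'⟩, hmem, rfl⟩; exact ⟨ε', ⟨hε', hmem⟩, rfl⟩
      · rintro ⟨ε', ⟨h1, h2⟩, rfl⟩; exact ⟨⟨ε', h1⟩, h2, rfl⟩
    rw [himage]
    set V₂ := (B ×ˢ ({z₀} : Set Tsub)) ∩ φ ⁻¹' V with hV₂def
    have hV₂o : IsOpen V₂ :=
      (hcont.mono (Set.prod_mono subset_rfl (Set.subset_univ _))).isOpen_inter_preimage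
        (hBo.prod (isOpen_discrete _)) hVo
    have hφV₂ : φ '' V₂ = Uε ∩ V := by
      ext ε'
      constructor
      · rintro ⟨p, ⟨hp1, hp2⟩, rfl⟩; exact ⟨⟨p, hp1, rfl⟩, hp2⟩
      · rintro ⟨⟨p, hp, rfl⟩, hpV⟩; exact ⟨p, ⟨hp, hpV⟩, rfl⟩
    set W₁ := Prod.fst '' V₂ with hW₁def
    have hW₁o : IsOpen W₁ := isOpenMap_fst V₂ hV₂o
    have hW₁B : W₁ ⊆ B := by rintro y ⟨p, hp, rfl⟩; exact hp.1.1
    have hrW₁o : IsOpen (TG.r '' W₁) := (himg W₁ (hW₁B.trans hBU) hW₁o).1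
    have hclaim : TS.r '' (Uε ∩ V)
        = (fun p : G × Tsub => i p.1 p.2) '' ((TG.r '' W₁) ×ˢ ({1} : Set Tsub)) := by
      rw [← hφV₂]
      ext y
      constructor
      · rintro ⟨ε', ⟨p, hp, rfl⟩, rfl⟩
        rw [hrφ p hp.1.1]
        exact ⟨(TG.r p.1, 1), Set.mem_prod.mpr ⟨⟨p.1, ⟨p, hp, rfl⟩, rfl⟩, rfl⟩, rfl⟩
      · rintro ⟨⟨y', w⟩, hmem, rfl⟩
        obtain ⟨y2, hy2, rfl⟩ := (Set.mem_prod.mp hmem).1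
        obtain ⟨p, hpV₂, rfl⟩ := hy2
        have hw : w = 1 := Set.mem_singleton_iff.mp (Set.mem_prod.mp hmem).2
        subst hw
        exact ⟨φ p, ⟨p, hpV₂, rfl⟩, by rw [hrφ p hpV₂.1.1]⟩
    rw [hclaim]
    apply i_image_open hTGt hetale hTw
    · rintro ⟨y, w⟩ hp
      refine Set.mem_prod.mpr ⟨?_, Set.mem_univ _⟩
      obtain ⟨y2, -, rfl⟩ := (Set.mem_prod.mp hp).1
      exact hTGt.r_unit y2
    · exact hrW₁o.prod (isOpen_discrete _)

end KeyAux3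
/-- Properties of a discrete twist `(Σ, i, q)` by
`Tsub ≤ Rˣ` over a Hausdorff étale groupoid `G`: (a) `Σ` is étale;
(b) `i` is a homeomorphism onto an open subset of `Σ`; (c) the local
trivialisations can be chosen with `P_α(G⁰ ∩ B_α) ⊆ Σ⁰`; (d) if `G` is
ample, the bisections `B_α` can be chosen compact. -/
theorem discreteTwist_properties
    {G S R : Type*} [TopologicalSpace G] [TopologicalSpace S]
    [T2Space G] [LocallyCompactSpace G]
    [CommRing R] [TopologicalSpace R] [DiscreteTopology R]
    (TG : GroupoidStruct G) (hTG : TG.IsTopGroupoid) (hetale : TG.IsEtale)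
    (TS : GroupoidStruct S) (Tsub : Subgroup Rˣ)
    (i : G → Tsub → S) (q : S → G)
    (hTw : IsDiscreteTwist TG TS Tsub i q) :
    -- (a) `Σ` is étale
    TS.IsEtale
    -- (b) `i` is a homeomorphism onto an open subset of `Σ`
    ∧ (IsOpen ((fun p : G × Tsub => i p.1 p.2) ''
          (TG.unitSpace ×ˢ (Set.univ : Set Tsub)))
        ∧ ∀ V ⊆ TG.unitSpace ×ˢ (Set.univ : Set Tsub), IsOpen V →
            IsOpen ((fun p : G × Tsub => i p.1 p.2) '' V))
    -- (c) local trivialisations with `P_α(G⁰ ∩ B_α) ⊆ Σ⁰`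
    ∧ (∀ α : G, ∃ B : Set G, α ∈ B ∧ IsOpen B ∧ TG.IsBisection B ∧
        ∃ P : G → S, ContinuousOn P B ∧ (∀ β ∈ B, q (P β) = β) ∧
          Set.BijOn (fun p : G × Tsub => TS.mul (i (TG.r p.1) p.2) (P p.1))
            (B ×ˢ (Set.univ : Set Tsub)) (q ⁻¹' B) ∧
          ContinuousOn (fun p : G × Tsub => TS.mul (i (TG.r p.1) p.2) (P p.1))
            (B ×ˢ (Set.univ : Set Tsub)) ∧
          (∀ V ⊆ B ×ˢ (Set.univ : Set Tsub), IsOpen V →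
            IsOpen ((fun p : G × Tsub => TS.mul (i (TG.r p.1) p.2) (P p.1)) '' V)) ∧
          ∀ x ∈ TG.unitSpace ∩ B, P x ∈ TS.unitSpace)
    -- (d) if `G` is ample, compact such bisections exist
    ∧ (TG.IsAmple → ∀ α : G, ∃ B : Set G,
        α ∈ B ∧ IsOpen B ∧ IsCompact B ∧ TG.IsBisection B ∧
        ∃ P : G → S, ContinuousOn P B ∧ (∀ β ∈ B, q (P β) = β) ∧
          Set.BijOn (fun p : G × Tsub => TS.mul (i (TG.r p.1) p.2) (P p.1))
            (B ×ˢ (Set.univ : Set Tsub)) (q ⁻¹' B) ∧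
          ContinuousOn (fun p : G × Tsub => TS.mul (i (TG.r p.1) p.2) (P p.1))
            (B ×ˢ (Set.univ : Set Tsub)) ∧
          ∀ V ⊆ B ×ˢ (Set.univ : Set Tsub), IsOpen V →
            IsOpen ((fun p : G × Tsub => TS.mul (i (TG.r p.1) p.2) (P p.1)) '' V)) := by
  have hU0 : IsOpen TG.unitSpace := unit_isOpen hTG.toIsGroupoid hetale
  have hGr := hTG.toIsGroupoid
  refine ⟨etaleS hTG hetale hTw, ⟨?_, i_image_open hTG hetale hTw⟩, ?_, ?_⟩
  · exact i_image_open hTG hetale hTw _ subset_rfl (hU0.prod isOpen_univ)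
  · -- (c)
    intro α
    obtain ⟨B, hαB, hBo, hbis, P, hP, hqP, hbij, hcont, hopen⟩ := hTw.locally_trivial α
    by_cases hα : α ∈ TG.unitSpace
    · -- α is a unit : use the shear construction on the set W from key_local
      obtain ⟨W, z₀, hαW, hWo, hWB, hWu, hPW, -⟩ :=
        key_local hTG hU0 hTw hα hαB hBo hP hqP hbij hopen
      set P' := fun β => TS.mul (i (TG.r β) z₀⁻¹) (P β) with hP'def
      set g := fun p : G × Tsub => (p.1, p.2 * z₀⁻¹) with hgdef
      set g' := fun p : G × Tsub => (p.1, p.2 * z₀) with hg'def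
      have hg : Continuous g := continuous_fst.prodMk
        ((continuous_of_discreteTopology (f := fun w : Tsub => w * z₀⁻¹)).comp
          continuous_snd)
      have hg'c : Continuous g' := continuous_fst.prodMk
        ((continuous_of_discreteTopology (f := fun w : Tsub => w * z₀)).comp
          continuous_snd)
      have hgg' : ∀ p : G × Tsub, g (g' p) = p := fun p =>
        Prod.ext rfl (mul_inv_cancel_right _ _)
      have hg'g : ∀ p : G × Tsub, g' (g p) = p := fun p =>
        Prod.ext rfl (inv_mul_cancel_right _ _)
      have hqP'B : ∀ β ∈ B, q (P' β) = β := fun β hβ =>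
        q_mul_i hGr hTw (P β) (hqP β hβ) z₀⁻¹
      have hφeq : ∀ p : G × Tsub, p.1 ∈ B →
          TS.mul (i (TG.r p.1) p.2) (P' p.1)
            = TS.mul (i (TG.r (g p).1) (g p).2) (P (g p).1) := by
        intro p hp
        calc TS.mul (i (TG.r p.1) p.2) (P' p.1)
            = twistAct TG TS i q p.2 (P' p.1) := mul_i_eq_act _ (hqP'B p.1 hp) _
          _ = twistAct TG TS i q p.2 (twistAct TG TS i q z₀⁻¹ (P p.1)) := by
              rw [show P' p.1 = twistAct TG TS i q z₀⁻¹ (P p.1) from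
                mul_i_eq_act _ (hqP p.1 hp) _]
          _ = twistAct TG TS i q (p.2 * z₀⁻¹) (P p.1) := act_act hGr hTw _ _ _
          _ = TS.mul (i (TG.r (g p).1) (g p).2) (P (g p).1) :=
              (mul_i_eq_act _ (hqP p.1 hp) _).symm
      have hgmaps : Set.MapsTo g (W ×ˢ (Set.univ : Set Tsub))
          (B ×ˢ (Set.univ : Set Tsub)) := by
        intro p hp
        exact Set.mem_prod.mpr ⟨hWB (Set.mem_prod.mp hp).1, Set.mem_univ _⟩
      refine ⟨W, hαW, hWo, isBisection_mono hWB hbis, P', ?_, ?_, ⟨?_, ?_, ?_⟩, ?_, ?_, ?_⟩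
      · -- ContinuousOn P' W
        exact (hcont.comp ((continuous_id.prodMk continuous_const).continuousOn)
          (fun β hβ => Set.mem_prod.mpr ⟨hWB hβ, Set.mem_univ _⟩) :
            ContinuousOn (fun β : G =>
              TS.mul (i (TG.r (β, z₀⁻¹).1) (β, z₀⁻¹).2) (P (β, z₀⁻¹).1)) W)
      · exact fun β hβ => hqP'B β (hWB hβ)
      · -- MapsTo
        intro p hp
        show q (TS.mul (i (TG.r p.1) p.2) (P' p.1)) ∈ W
        rw [q_mul_i hGr hTw (P' p.1) (hqP'B p.1 (hWB (Set.mem_prod.mp hp).1)) p.2]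
        exact (Set.mem_prod.mp hp).1
      · -- InjOn
        intro p hp p' hp' h
        have h : TS.mul (i (TG.r p.1) p.2) (P' p.1)
            = TS.mul (i (TG.r p'.1) p'.2) (P' p'.1) := h
        rw [hφeq p (hWB (Set.mem_prod.mp hp).1), hφeq p' (hWB (Set.mem_prod.mp hp').1)] at h
        have := hbij.injOn (hgmaps hp) (hgmaps hp') h
        rw [← hg'g p, this, hg'g p']
      · -- SurjOn
        intro ε hε
        have hε' : ε ∈ q ⁻¹' B := hWB hε
        obtain ⟨p, hp, hφp⟩ := hbij.surjOn hε'
        have h1 : p.1 = q ε := by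
          rw [← hφp, q_mul_i hGr hTw (P p.1) (hqP p.1 (Set.mem_prod.mp hp).1) p.2]
        refine ⟨g' p, Set.mem_prod.mpr ⟨?_, Set.mem_univ _⟩, ?_⟩
        · show p.1 ∈ W
          rw [h1]; exact hε
        · show TS.mul (i (TG.r (g' p).1) (g' p).2) (P' (g' p).1) = ε
          rw [hφeq (g' p) (by show p.1 ∈ B; exact (Set.mem_prod.mp hp).1), hgg' p]
          exact hφp
      · -- ContinuousOn φ'
        refine (hcont.comp hg.continuousOn hgmaps).congr ?_
        intro p hp
        exact hφeq p (hWB (Set.mem_prod.mp hp).1)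
      · -- open images
        intro V hV hVo
        have h1 : (fun p : G × Tsub => TS.mul (i (TG.r p.1) p.2) (P' p.1)) '' V
            = (fun p : G × Tsub => TS.mul (i (TG.r p.1) p.2) (P p.1)) '' (g '' V) := by
          rw [Set.image_image]
          exact Set.image_congr fun p hp => hφeq p (hWB (Set.mem_prod.mp (hV hp)).1)
        have hgV : g '' V = g' ⁻¹' V :=
          congrFun (Set.image_eq_preimage_of_inverse hg'g hgg') V
        rw [h1]
        refine hopen _ ?_ ?_
        · rintro p2 ⟨p, hp, rfl⟩
          exact Set.mem_prod.mpr ⟨hWB (Set.mem_prod.mp (hV hp)).1, Set.mem_univ _⟩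
        · rw [hgV]; exact hVo.preimage hg'c
      · -- unit condition
        rintro x ⟨hx0, hxW⟩
        show TS.mul (i (TG.r x) z₀⁻¹) (P x) ∈ TS.unitSpace
        have hr : TG.r x = x := hWu hxW
        rw [hr, hPW x hxW, hTw.i_mul x hx0 z₀⁻¹ z₀, inv_mul_cancel]
        rw [hTw.unit_eq]
        exact ⟨x, hx0, rfl⟩
    · -- α is not a unit : remove the (closed) unit space from B
      obtain ⟨hP', hqP', hbij', hcont', hopen'⟩ := restrict_triv hTG hTw
        (Set.diff_subset : B \ TG.unitSpace ⊆ B) hP hqP hbij hcont hopen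
      refine ⟨B \ TG.unitSpace, ⟨hαB, hα⟩, hBo.sdiff (unit_isClosed hTG),
        isBisection_mono Set.diff_subset hbis, P, hP', hqP', hbij', hcont', hopen', ?_⟩
      rintro x ⟨hx1, hx2⟩
      exact absurd hx1 hx2.2
  · -- (d)
    intro hample α
    obtain ⟨B, hαB, hBo, hbis, P, hP, hqP, hbij, hcont, hopen⟩ := hTw.locally_trivial α
    obtain ⟨K, hK, hαK, hKB⟩ := hample.exists_subset_of_mem_open hαB hBo
    obtain ⟨hKc, hKo, hKbis⟩ := hK
    obtain ⟨hP', hqP', hbij', hcont', hopen'⟩ :=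
      restrict_triv hTG hTw hKB hP hqP hbij hcont hopen
    exact ⟨K, hαK, hKo, hKc, hKbis, P, hP', hqP', hbij', hcont', hopen'⟩

end TwistedSteinberg
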